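/- The abelianizations of GL_1(ℤ), GL_2(ℤ), GL_3(ℤ) are elementary abelian 2-groups: GL_1(ℤ)_ab ≅ ℤ/2 generated by (-1); GL_2(ℤ)_ab ≅ (ℤ/2)^2 generated by the classes of diag(-1,1) and [[1,1],[0,1]]; GL_3(ℤ)_ab ≅ ℤ/2 generated by diag(-1,1,1). Moreover the stabilisation maps (block sum with the 1×1 identity) send diag(-1,1) ↦ diag(-1,1,1) and [[1,1],[0,1]] ↦ 0 in GL_3(ℤ)_ab. -/

import Mathlib

open Matrix

/-- Block sum with a `1×1` identity block, as a multiplicative map of matrix monoids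
(the new coordinate comes first). -/
def stabMonoidHom (n : ℕ) :
    Matrix (Fin n) (Fin n) ℤ →* Matrix (Fin (1 + n)) (Fin (1 + n)) ℤ where
  toFun A := (Matrix.fromBlocks (1 : Matrix (Fin 1) (Fin 1) ℤ) 0 0 A).submatrix
    finSumFinEquiv.symm finSumFinEquiv.symm
  map_one' := by
    show (Matrix.fromBlocks (1 : Matrix (Fin 1) (Fin 1) ℤ) 0 0 (1 : Matrix (Fin n) (Fin n) ℤ)).submatrix
        finSumFinEquiv.symm finSumFinEquiv.symm = 1
    rw [Matrix.fromBlocks_one]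
    exact Matrix.submatrix_one_equiv finSumFinEquiv.symm
  map_mul' A B := by
    show (Matrix.fromBlocks (1 : Matrix (Fin 1) (Fin 1) ℤ) 0 0 (A * B)).submatrix
        finSumFinEquiv.symm finSumFinEquiv.symm = _
    rw [show (Matrix.fromBlocks (1 : Matrix (Fin 1) (Fin 1) ℤ) 0 0 (A * B))
        = Matrix.fromBlocks 1 0 0 A * Matrix.fromBlocks 1 0 0 B by
        rw [Matrix.fromBlocks_multiply]; simp]
    rw [← Matrix.submatrix_mul_equiv (Matrix.fromBlocks 1 0 0 A) (Matrix.fromBlocks 1 0 0 B)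
      _ finSumFinEquiv.symm _]

/-- The stabilisation map `GL_n(ℤ) → GL_{1+n}(ℤ)`, block sum with a `1×1` identity. -/
def stabGL (n : ℕ) : GL (Fin n) ℤ →* GL (Fin (1 + n)) ℤ := Units.map (stabMonoidHom n)

/-- An element of `GL_n(ℤ)` from a matrix which is its own inverse. -/
def glOfInvol {n : ℕ} (M : Matrix (Fin n) (Fin n) ℤ) (h : M * M = 1) : GL (Fin n) ℤ :=
  ⟨M, M, h, h⟩

def s1 : GL (Fin 1) ℤ := glOfInvol !![-1] (by decide)

def s2 : GL (Fin 2) ℤ := glOfInvol !![-1, 0; 0, 1] (by decide)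

def t2 : GL (Fin 2) ℤ :=
  ⟨!![1, 1; 0, 1], !![1, -1; 0, 1], by decide, by decide⟩

def s3 : GL (Fin 3) ℤ := glOfInvol !![-1, 0, 0; 0, 1, 0; 0, 0, 1] (by decide)


-- ## GL2 aux
def tE (c : ℤ) : GL (Fin 2) ℤ :=
  ⟨!![1,c;0,1], !![1,-c;0,1],
   by ext i j; fin_cases i <;> fin_cases j <;> simp [Matrix.mul_apply, Fin.sum_univ_succ],
   by ext i j; fin_cases i <;> fin_cases j <;> simp [Matrix.mul_apply, Fin.sum_univ_succ]⟩

def uE (c : ℤ) : GL (Fin 2) ℤ :=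
  ⟨!![1,0;c,1], !![1,0;-c,1],
   by ext i j; fin_cases i <;> fin_cases j <;> simp [Matrix.mul_apply, Fin.sum_univ_succ],
   by ext i j; fin_cases i <;> fin_cases j <;> simp [Matrix.mul_apply, Fin.sum_univ_succ]⟩

abbrev H2 : Subgroup (GL (Fin 2) ℤ) := Subgroup.closure {s2, t2, uE 1}

lemma tE_mul (c d : ℤ) : tE c * tE d = tE (c + d) := by
  apply Units.ext
  show (tE c).val * (tE d).val = (tE (c+d)).val
  ext i j; fin_cases i <;> fin_cases j <;>
    simp [tE, Matrix.mul_apply, Fin.sum_univ_succ] <;> ring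

lemma uE_mul (c d : ℤ) : uE c * uE d = uE (c + d) := by
  apply Units.ext
  show (uE c).val * (uE d).val = (uE (c+d)).val
  ext i j; fin_cases i <;> fin_cases j <;>
    simp [uE, Matrix.mul_apply, Fin.sum_univ_succ] <;> ring

lemma tE_one : tE 1 = t2 := Units.ext rfl
lemma tE_zero : tE 0 = 1 := Units.ext (by decide)
lemma uE_zero : uE 0 = 1 := Units.ext (by decide)

lemma tE_mem (c : ℤ) : tE c ∈ H2 := by
  induction c using Int.induction_on with
  | zero => rw [tE_zero]; exact one_mem _
  | succ i ihi => rw [← tE_mul]; exact mul_mem ihi (by rw [tE_one]; exact Subgroup.subset_closure (by simp))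
  | pred i ihi =>
      have : tE (-i - 1) = tE (-i) * tE (-1) := by rw [tE_mul]; ring_nf
      rw [this]
      refine mul_mem ihi ?_
      have h1 : tE (-1) = (tE 1)⁻¹ := by
        rw [eq_inv_iff_mul_eq_one, tE_mul]; norm_num [tE_zero]
      rw [h1, tE_one]
      exact inv_mem (Subgroup.subset_closure (by simp))

lemma uE_mem (c : ℤ) : uE c ∈ H2 := by
  induction c using Int.induction_on with
  | zero => rw [uE_zero]; exact one_mem _
  | succ i ihi => rw [← uE_mul]; exact mul_mem ihi (Subgroup.subset_closure (by simp))
  | pred i ihi =>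
      have : uE (-i - 1) = uE (-i) * uE (-1) := by rw [uE_mul]; ring_nf
      rw [this]
      refine mul_mem ihi ?_
      have h1 : uE (-1) = (uE 1)⁻¹ := by
        rw [eq_inv_iff_mul_eq_one, uE_mul]; norm_num [uE_zero]
      rw [h1]
      exact inv_mem (Subgroup.subset_closure (by simp))

def rot2 : GL (Fin 2) ℤ := t2 * uE (-1) * t2
lemma rot2_mem : rot2 ∈ H2 :=
  mul_mem (mul_mem (Subgroup.subset_closure (by simp)) (uE_mem _)) (Subgroup.subset_closure (by simp))
lemma rot2_val : (rot2).val = !![0,1;-1,0] := by decide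

lemma natAbs_emod_lt' (a c : ℤ) (h : c ≠ 0) : (a % c).natAbs < c.natAbs := by
  have h1 : 0 ≤ a % c := Int.emod_nonneg a h
  have h2 : a % c < |c| := by
    rw [← Int.emod_abs]; exact Int.emod_lt_of_pos a (abs_pos.mpr h)
  rw [Int.abs_eq_natAbs] at h2; omega

lemma s2_mem : s2 ∈ H2 := Subgroup.subset_closure (by simp)

lemma gen2 : ∀ M : GL (Fin 2) ℤ, M ∈ H2 := by
  suffices h : ∀ n (M : GL (Fin 2) ℤ), (M.val 1 0).natAbs = n → M ∈ H2 from fun M => h _ M rfl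
  intro n
  induction n using Nat.strong_induction_on with
  | _ n ih =>
    intro M hn
    by_cases hc : M.val 1 0 = 0
    · -- base case
      have hdet : IsUnit (M.val.det) := (Matrix.isUnit_iff_isUnit_det _).mp M.isUnit
      rw [Matrix.det_fin_two, hc, mul_zero, sub_zero] at hdet
      have ha := Int.isUnit_iff.mp (isUnit_of_mul_isUnit_left hdet)
      have hd := Int.isUnit_iff.mp (isUnit_of_mul_isUnit_right hdet)
      rcases ha with ha | ha <;> rcases hd with hd | hd
      · have : M = tE (M.val 0 1) := by
          apply Units.ext
          ext i j; fin_cases i <;> fin_cases j <;> simp [tE, ha, hd, hc]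
        rw [this]; exact tE_mem _
      · have : M = s2 * rot2 * rot2 * tE (M.val 0 1) := by
          apply Units.ext
          have hX : (s2 * rot2 * rot2).val = !![(1:ℤ),0;0,-1] := by decide
          show M.val = (s2 * rot2 * rot2).val * (tE (M.val 0 1)).val
          rw [hX]
          ext i j; fin_cases i <;> fin_cases j <;>
            simp [tE, ha, hd, hc, Matrix.mul_apply, Fin.sum_univ_succ]
        rw [this]
        exact mul_mem (mul_mem (mul_mem s2_mem rot2_mem) rot2_mem) (tE_mem _)
      · have : M = s2 * tE (-M.val 0 1) := by
          apply Units.ext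
          show M.val = s2.val * (tE (-M.val 0 1)).val
          ext i j; fin_cases i <;> fin_cases j <;>
            simp [s2, glOfInvol, tE, ha, hd, hc, Matrix.mul_apply, Fin.sum_univ_succ]
        rw [this]; exact mul_mem s2_mem (tE_mem _)
      · have : M = rot2 * rot2 * tE (-M.val 0 1) := by
          apply Units.ext
          show M.val = rot2.val * rot2.val * (tE (-M.val 0 1)).val
          rw [rot2_val]
          ext i j; fin_cases i <;> fin_cases j <;>
            simp [tE, ha, hd, hc, Matrix.mul_apply, Fin.sum_univ_succ]
        rw [this]; exact mul_mem (mul_mem rot2_mem rot2_mem) (tE_mem _)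
    · -- step
      set q : ℤ := M.val 0 0 / M.val 1 0 with hq
      have hgval : (rot2 * tE (-q)).val = !![0,1;-1,q] := by
        show rot2.val * (tE (-q)).val = _
        rw [rot2_val]
        ext i j; fin_cases i <;> fin_cases j <;>
          simp [tE, Matrix.mul_apply, Fin.sum_univ_succ]
      have key : ((rot2 * tE (-q) * M).val 1 0) = -(M.val 0 0 % M.val 1 0) := by
        have : (rot2 * tE (-q) * M).val = (rot2 * tE (-q)).val * M.val := rfl
        rw [this, hgval]
        have hmod : M.val 0 0 % M.val 1 0 = M.val 0 0 - M.val 1 0 * q := by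
          rw [hq, eq_sub_iff_add_eq, Int.emod_add_mul_ediv]
        rw [hmod]
        simp [Matrix.mul_apply, Fin.sum_univ_succ]
        ring
      have hlt : ((rot2 * tE (-q) * M).val 1 0).natAbs < n := by
        rw [key, Int.natAbs_neg, ← hn]
        exact natAbs_emod_lt' _ _ hc
      have hmem := ih _ hlt (rot2 * tE (-q) * M) rfl
      have : M = (rot2 * tE (-q))⁻¹ * (rot2 * tE (-q) * M) := by group
      rw [this]
      exact mul_mem (inv_mem (mul_mem rot2_mem (tE_mem _))) hmem

-- ## GL3 aux
def eM (i j : Fin 3) (c : ℤ) : Matrix (Fin 3) (Fin 3) ℤ := 1 + Matrix.single i j c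

lemma eM_mul {i j : Fin 3} (hij : j ≠ i) (c d : ℤ) : eM i j c * eM i j d = eM i j (c + d) := by
  simp [eM, add_mul, mul_add, Matrix.single_mul_single_of_ne (h := hij),
    Matrix.single_add]
  rw [Matrix.single_mul_single_of_ne (h := hij), add_zero]
  abel

lemma eM_zero (i j : Fin 3) : eM i j 0 = 1 := by simp [eM]

def eU (i j : Fin 3) (hij : j ≠ i) (c : ℤ) : GL (Fin 3) ℤ :=
  ⟨eM i j c, eM i j (-c), by rw [eM_mul hij]; simpa using eM_zero i j,
    by rw [eM_mul hij]; simpa using eM_zero i j⟩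

lemma eU_mul (i j : Fin 3) (hij : j ≠ i) (c d : ℤ) :
    eU i j hij c * eU i j hij d = eU i j hij (c + d) := Units.ext (eM_mul hij c d)

lemma eU_zero (i j : Fin 3) (hij : j ≠ i) : eU i j hij 0 = 1 := Units.ext (eM_zero i j)

def e01 (c : ℤ) : GL (Fin 3) ℤ := eU 0 1 (by decide) c
def e10 (c : ℤ) : GL (Fin 3) ℤ := eU 1 0 (by decide) c
def e12 (c : ℤ) : GL (Fin 3) ℤ := eU 1 2 (by decide) c
def e21 (c : ℤ) : GL (Fin 3) ℤ := eU 2 1 (by decide) c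
def e02 (c : ℤ) : GL (Fin 3) ℤ := eU 0 2 (by decide) c
def e20 (c : ℤ) : GL (Fin 3) ℤ := eU 2 0 (by decide) c

abbrev H3 : Subgroup (GL (Fin 3) ℤ) :=
  Subgroup.closure {s3, e01 1, e10 1, e12 1, e21 1, e02 1}

lemma eU_mem (i j : Fin 3) (hij : j ≠ i) (h1 : eU i j hij 1 ∈ H3) (c : ℤ) :
    eU i j hij c ∈ H3 := by
  induction c using Int.induction_on with
  | zero => rw [eU_zero]; exact one_mem _
  | succ k ihk => rw [← eU_mul]; exact mul_mem ihk h1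
  | pred k ihk =>
      have h : eU i j hij (-k - 1) = eU i j hij (-k) * eU i j hij (-1) := by
        rw [eU_mul]; ring_nf
      rw [h]
      refine mul_mem ihk ?_
      have h1' : eU i j hij (-1) = (eU i j hij 1)⁻¹ := by
        rw [eq_inv_iff_mul_eq_one, eU_mul]; norm_num [eU_zero]
      rw [h1']; exact inv_mem h1

lemma e01_mem (c : ℤ) : e01 c ∈ H3 := eU_mem _ _ _ (Subgroup.subset_closure (by simp [e01])) c
lemma e10_mem (c : ℤ) : e10 c ∈ H3 := eU_mem _ _ _ (Subgroup.subset_closure (by simp [e10])) c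
lemma e12_mem (c : ℤ) : e12 c ∈ H3 := eU_mem _ _ _ (Subgroup.subset_closure (by simp [e12])) c
lemma e21_mem (c : ℤ) : e21 c ∈ H3 := eU_mem _ _ _ (Subgroup.subset_closure (by simp [e21])) c
lemma e02_mem (c : ℤ) : e02 c ∈ H3 := eU_mem _ _ _ (Subgroup.subset_closure (by simp [e02])) c
lemma s3_mem : s3 ∈ H3 := Subgroup.subset_closure (by simp)

def rot01 : GL (Fin 3) ℤ := e01 1 * e10 (-1) * e01 1
def rot12 : GL (Fin 3) ℤ := e12 1 * e21 (-1) * e12 1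

lemma rot01_val : rot01.val = !![0,1,0;-1,0,0;0,0,1] := by decide
lemma rot12_val : rot12.val = !![1,0,0;0,0,1;0,-1,0] := by decide
lemma rot01_mem : rot01 ∈ H3 := mul_mem (mul_mem (e01_mem 1) (e10_mem (-1))) (e01_mem 1)
lemma rot12_mem : rot12 ∈ H3 := mul_mem (mul_mem (e12_mem 1) (e21_mem (-1))) (e12_mem 1)

lemma e01_val (c : ℤ) : (e01 c).val = !![1,c,0;0,1,0;0,0,1] := by
  ext i j; fin_cases i <;> fin_cases j <;>
    simp [e01, eU, eM, Matrix.single, Matrix.one_apply, Matrix.vecHead, Matrix.vecTail]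
lemma e12_val (c : ℤ) : (e12 c).val = !![1,0,0;0,1,c;0,0,1] := by
  ext i j; fin_cases i <;> fin_cases j <;>
    simp [e12, eU, eM, Matrix.single, Matrix.one_apply, Matrix.vecHead, Matrix.vecTail]
lemma e02_val (c : ℤ) : (e02 c).val = !![1,0,c;0,1,0;0,0,1] := by
  ext i j; fin_cases i <;> fin_cases j <;>
    simp [e02, eU, eM, Matrix.single, Matrix.one_apply, Matrix.vecHead, Matrix.vecTail]

-- stab images of GL2 generators
lemma stab_s2 : stabGL 2 s2 = s3 * rot01 * rot01 := Units.ext (by decide)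
lemma stab_t2 : stabGL 2 t2 = e12 1 := Units.ext (by decide)
lemma stab_uE : stabGL 2 (uE 1) = e21 1 := Units.ext (by decide)

lemma stab_mem (B : GL (Fin 2) ℤ) : stabGL 2 B ∈ H3 := by
  have hle : H2 ≤ H3.comap (stabGL 2) := by
    rw [Subgroup.closure_le]
    rintro x (rfl | rfl | rfl)
    · show stabGL 2 s2 ∈ H3
      rw [stab_s2]; exact mul_mem (mul_mem s3_mem rot01_mem) rot01_mem
    · show stabGL 2 t2 ∈ H3
      rw [stab_t2]; exact e12_mem 1
    · show stabGL 2 (uE 1) ∈ H3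
      rw [stab_uE]; exact e21_mem 1
  exact hle (gen2 B)

lemma stab_exists (N : GL (Fin 3) ℤ) (h00 : N.val 0 0 = 1) (h01 : N.val 0 1 = 0)
    (h02 : N.val 0 2 = 0) (h10 : N.val 1 0 = 0) (h20 : N.val 2 0 = 0) :
    ∃ B : GL (Fin 2) ℤ, stabGL 2 B = N := by
  have vi : ∀ i j : Fin 3, N.val i 0 * N.inv 0 j + N.val i 1 * N.inv 1 j
      + N.val i 2 * N.inv 2 j = if i = j then 1 else 0 := by
    intro i j
    have := congrFun (congrFun N.val_inv i) j
    simpa [Matrix.mul_apply, Fin.sum_univ_three, Matrix.one_apply] using this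
  have iv : ∀ i j : Fin 3, N.inv i 0 * N.val 0 j + N.inv i 1 * N.val 1 j
      + N.inv i 2 * N.val 2 j = if i = j then 1 else 0 := by
    intro i j
    have := congrFun (congrFun N.inv_val i) j
    simpa [Matrix.mul_apply, Fin.sum_univ_three, Matrix.one_apply] using this
  have hi10 : N.inv 1 0 = 0 := by have := iv 1 0; rw [h00, h10, h20] at this; simpa using this
  have hi20 : N.inv 2 0 = 0 := by have := iv 2 0; rw [h00, h10, h20] at this; simpa using this
  have hi01 : N.inv 0 1 = 0 := by have := vi 0 1; rw [h00, h01, h02] at this; simpa using this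
  have hi02 : N.inv 0 2 = 0 := by have := vi 0 2; rw [h00, h01, h02] at this; simpa using this
  refine ⟨⟨!![N.val 1 1, N.val 1 2; N.val 2 1, N.val 2 2],
          !![N.inv 1 1, N.inv 1 2; N.inv 2 1, N.inv 2 2], ?_, ?_⟩, ?_⟩
  · ext i j
    fin_cases i <;> fin_cases j <;>
      simp [Matrix.mul_apply, Fin.sum_univ_succ, Matrix.one_apply]
    · have := vi 1 1; rw [h10] at this; simpa using this
    · have := vi 1 2; rw [h10] at this; simpa using this
    · have := vi 2 1; rw [h20] at this; simpa using this
    · have := vi 2 2; rw [h20] at this; simpa using this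
  · ext i j
    fin_cases i <;> fin_cases j <;>
      simp [Matrix.mul_apply, Fin.sum_univ_succ, Matrix.one_apply]
    · have := iv 1 1; rw [hi10] at this; simpa using this
    · have := iv 1 2; rw [hi10] at this; simpa using this
    · have := iv 2 1; rw [hi20] at this; simpa using this
    · have := iv 2 2; rw [hi20] at this; simpa using this
  · apply Units.ext
    show (stabMonoidHom 2) _ = N.val
    have hf0 : finSumFinEquiv.symm (0 : Fin (1+2)) = Sum.inl (0 : Fin 1) := by decide
    have hf1 : finSumFinEquiv.symm (1 : Fin (1+2)) = Sum.inr (0 : Fin 2) := by decide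
    have hf2 : finSumFinEquiv.symm (2 : Fin (1+2)) = Sum.inr (1 : Fin 2) := by decide
    ext i j
    fin_cases i <;> fin_cases j <;>
      simp [stabMonoidHom, Matrix.submatrix_apply, hf0, hf1, hf2, Matrix.one_apply,
        h00, h01, h02, h10, h20]

lemma base1 (M : GL (Fin 3) ℤ) (h00 : M.val 0 0 = 1) (h10 : M.val 1 0 = 0)
    (h20 : M.val 2 0 = 0) : M ∈ H3 := by
  set a := M.val 0 1 with ha
  set b := M.val 0 2 with hb
  have hR : ((e01 (-a) * e02 (-b)).val) = !![1,-a,-b;0,1,0;0,0,1] := by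
    show (e01 (-a)).val * (e02 (-b)).val = _
    rw [e01_val, e02_val]
    ext i j; fin_cases i <;> fin_cases j <;>
      simp [Matrix.mul_apply, Fin.sum_univ_succ, Matrix.vecHead, Matrix.vecTail]
  set N := M * (e01 (-a) * e02 (-b)) with hN
  have hNval : N.val = M.val * !![1,-a,-b;0,1,0;0,0,1] := by rw [hN]; rw [Units.val_mul, hR]
  have entry : ∀ i j, N.val i j = (M.val * !![1,-a,-b;0,1,0;0,0,1]) i j := fun i j => by
    rw [hNval]
  have h00' : N.val 0 0 = 1 := by
    rw [entry]; simp [Matrix.mul_apply, Fin.sum_univ_three, h00, Matrix.vecHead, Matrix.vecTail]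
  have h10' : N.val 1 0 = 0 := by
    rw [entry]; simp [Matrix.mul_apply, Fin.sum_univ_three, h10, Matrix.vecHead, Matrix.vecTail]
  have h20' : N.val 2 0 = 0 := by
    rw [entry]; simp [Matrix.mul_apply, Fin.sum_univ_three, h20, Matrix.vecHead, Matrix.vecTail]
  have h01' : N.val 0 1 = 0 := by
    rw [entry]; simp [Matrix.mul_apply, Fin.sum_univ_three, h00, ← ha]
  have h02' : N.val 0 2 = 0 := by
    rw [entry]; simp [Matrix.mul_apply, Fin.sum_univ_three, h00, ← hb]
  obtain ⟨B, hB⟩ := stab_exists N h00' h01' h02' h10' h20'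
  have hNH : N ∈ H3 := hB ▸ stab_mem B
  have : M = N * (e01 (-a) * e02 (-b))⁻¹ := by rw [hN]; group
  rw [this]
  exact mul_mem hNH (inv_mem (mul_mem (e01_mem _) (e02_mem _)))

lemma base0 (M : GL (Fin 3) ℤ) (h10 : M.val 1 0 = 0) (h20 : M.val 2 0 = 0) : M ∈ H3 := by
  have hdet : IsUnit (M.val.det) := (Matrix.isUnit_iff_isUnit_det _).mp M.isUnit
  have hdet' : M.val.det = M.val 0 0 * (M.val 1 1 * M.val 2 2 - M.val 1 2 * M.val 2 1) := by
    rw [Matrix.det_fin_three, h10, h20]; ring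
  rw [hdet'] at hdet
  rcases Int.isUnit_iff.mp (isUnit_of_mul_isUnit_left hdet) with ha | ha
  · exact base1 M ha h10 h20
  · have hs : ∀ j, (s3 * M).val 0 j = -(M.val 0 j) := by
      intro j
      show (s3.val * M.val) 0 j = _
      simp [s3, glOfInvol, Matrix.mul_apply, Fin.sum_univ_three]
    have hrow : ∀ j, (s3 * M).val 1 j = M.val 1 j ∧ (s3 * M).val 2 j = M.val 2 j := by
      intro j
      constructor <;>
      · show (s3.val * M.val) _ j = _
        simp [s3, glOfInvol, Matrix.mul_apply, Fin.sum_univ_three]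
    have hm : s3 * M ∈ H3 := by
      refine base1 _ ?_ ?_ ?_
      · rw [hs 0, ha]; norm_num
      · rw [(hrow 0).1, h10]
      · rw [(hrow 0).2, h20]
    have : M = s3⁻¹ * (s3 * M) := by group
    rw [this]; exact mul_mem (inv_mem s3_mem) hm

lemma genB : ∀ (n : ℕ) (M : GL (Fin 3) ℤ), M.val 2 0 = 0 → (M.val 1 0).natAbs = n → M ∈ H3 := by
  intro n
  induction n using Nat.strong_induction_on with
  | _ n ih =>
    intro M h20 hn
    by_cases h10 : M.val 1 0 = 0
    · exact base0 M h10 h20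
    · set q : ℤ := M.val 0 0 / M.val 1 0 with hq
      have hgval : (rot01 * e01 (-q)).val = !![0,1,0;-1,q,0;0,0,1] := by
        show rot01.val * (e01 (-q)).val = _
        rw [rot01_val, e01_val]
        ext i j; fin_cases i <;> fin_cases j <;>
          simp [Matrix.mul_apply, Fin.sum_univ_succ, Matrix.vecHead, Matrix.vecTail]
      have hentry : ∀ i j, ((rot01 * e01 (-q)) * M).val i j = (!![0,1,0;-1,q,0;0,0,1] * M.val) i j := by
        intro i j
        rw [show ((rot01 * e01 (-q)) * M).val = (rot01 * e01 (-q)).val * M.val from rfl, hgval]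
      have key : ((rot01 * e01 (-q)) * M).val 1 0 = -(M.val 0 0 % M.val 1 0) := by
        rw [hentry]
        have hmod : M.val 0 0 % M.val 1 0 = M.val 0 0 - M.val 1 0 * q := by
          rw [hq, eq_sub_iff_add_eq, Int.emod_add_mul_ediv]
        rw [hmod]
        simp [Matrix.mul_apply, Fin.sum_univ_three, Matrix.vecHead, Matrix.vecTail]
        ring
      have h20' : ((rot01 * e01 (-q)) * M).val 2 0 = 0 := by
        rw [hentry]
        simp [Matrix.mul_apply, Fin.sum_univ_three, Matrix.vecHead, Matrix.vecTail, h20]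
      have hlt : (((rot01 * e01 (-q)) * M).val 1 0).natAbs < n := by
        rw [key, Int.natAbs_neg, ← hn]
        exact natAbs_emod_lt' _ _ h10
      have hmem := ih _ hlt _ h20' rfl
      have : M = (rot01 * e01 (-q))⁻¹ * ((rot01 * e01 (-q)) * M) := by group
      rw [this]
      exact mul_mem (inv_mem (mul_mem rot01_mem (e01_mem _))) hmem

lemma gen3 : ∀ M : GL (Fin 3) ℤ, M ∈ H3 := by
  suffices h : ∀ (n : ℕ) (M : GL (Fin 3) ℤ), (M.val 2 0).natAbs = n → M ∈ H3 from
    fun M => h _ M rfl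
  intro n
  induction n using Nat.strong_induction_on with
  | _ n ih =>
    intro M hn
    by_cases h20 : M.val 2 0 = 0
    · exact genB _ M h20 rfl
    · set q : ℤ := M.val 1 0 / M.val 2 0 with hq
      have hgval : (rot12 * e12 (-q)).val = !![1,0,0;0,0,1;0,-1,q] := by
        show rot12.val * (e12 (-q)).val = _
        rw [rot12_val, e12_val]
        ext i j; fin_cases i <;> fin_cases j <;>
          simp [Matrix.mul_apply, Fin.sum_univ_succ, Matrix.vecHead, Matrix.vecTail]
      have hentry : ∀ i j, ((rot12 * e12 (-q)) * M).val i j = (!![1,0,0;0,0,1;0,-1,q] * M.val) i j := by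
        intro i j
        rw [show ((rot12 * e12 (-q)) * M).val = (rot12 * e12 (-q)).val * M.val from rfl, hgval]
      have key : ((rot12 * e12 (-q)) * M).val 2 0 = -(M.val 1 0 % M.val 2 0) := by
        rw [hentry]
        have hmod : M.val 1 0 % M.val 2 0 = M.val 1 0 - M.val 2 0 * q := by
          rw [hq, eq_sub_iff_add_eq, Int.emod_add_mul_ediv]
        rw [hmod]
        simp [Matrix.mul_apply, Fin.sum_univ_three, Matrix.vecHead, Matrix.vecTail]
        ring
      have hlt : (((rot12 * e12 (-q)) * M).val 2 0).natAbs < n := by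
        rw [key, Int.natAbs_neg, ← hn]
        exact natAbs_emod_lt' _ _ h20
      have hmem := ih _ hlt _ rfl
      have : M = (rot12 * e12 (-q))⁻¹ * ((rot12 * e12 (-q)) * M) := by group
      rw [this]
      exact mul_mem (inv_mem (mul_mem rot12_mem (e12_mem _))) hmem



lemma four_cases {G : Type*} [CommGroup G] {a b : G} (ha : a*a = 1) (hb : b*b = 1) :
    ∀ x ∈ Subgroup.closure {a, b}, x = 1 ∨ x = a ∨ x = b ∨ x = a*b := by
  intro x hx
  have inv_invol : ∀ y : G, y * y = 1 → y⁻¹ = y := fun y hy => inv_eq_of_mul_eq_one_right hy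
  induction hx using Subgroup.closure_induction with
  | mem x hx => rcases hx with rfl | rfl
                · right; left; rfl
                · right; right; left; rfl
  | one => left; rfl
  | mul x y hx hy px py =>
      rcases px with rfl | rfl | rfl | rfl <;> rcases py with rfl | rfl | rfl | rfl <;>
        simp [ha, hb, mul_comm, mul_left_comm, ← mul_assoc]
  | inv x hx px =>
      rcases px with rfl | rfl | rfl | rfl
      · simp
      · right; left; exact inv_invol _ ha
      · right; right; left; exact inv_invol _ hb
      · right; right; right
        rw [mul_inv, inv_invol _ ha, inv_invol _ hb]

-- ## Abelianization helpers
lemma of_surj {G : Type*} [Group G] : Function.Surjective (Abelianization.of (G := G)) :=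
  Quotient.exists_rep

open scoped commutatorElement

lemma of_comm_one {G : Type*} [Group G] (a b : G) : Abelianization.of ⁅a, b⁆ = 1 := by
  rw [map_commutatorElement]
  exact commutatorElement_eq_one_iff_mul_comm.mpr (mul_comm _ _)

lemma of_conj {G : Type*} [Group G] (g h : G) :
    Abelianization.of (g * h * g⁻¹) = Abelianization.of h := by
  rw [_root_.map_mul, _root_.map_mul, _root_.map_inv, mul_comm (Abelianization.of g) (Abelianization.of h),
    mul_inv_cancel_right]

-- commutator identities in GL3
lemma comm_e01 : e01 1 = ⁅e02 1, e21 1⁆ := Units.ext (by decide)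
lemma comm_e10 : e10 1 = ⁅e12 1, e20 1⁆ := Units.ext (by decide)
lemma comm_e12 : e12 1 = ⁅e10 1, e02 1⁆ := Units.ext (by decide)
lemma comm_e21 : e21 1 = ⁅e20 1, e01 1⁆ := Units.ext (by decide)
lemma comm_e02 : e02 1 = ⁅e01 1, e12 1⁆ := Units.ext (by decide)

lemma of_e01 : Abelianization.of (e01 1) = 1 := by rw [comm_e01]; exact of_comm_one _ _
lemma of_e10 : Abelianization.of (e10 1) = 1 := by rw [comm_e10]; exact of_comm_one _ _
lemma of_e12 : Abelianization.of (e12 1) = 1 := by rw [comm_e12]; exact of_comm_one _ _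
lemma of_e21 : Abelianization.of (e21 1) = 1 := by rw [comm_e21]; exact of_comm_one _ _
lemma of_e02 : Abelianization.of (e02 1) = 1 := by rw [comm_e02]; exact of_comm_one _ _

lemma ab3_cases (x : Abelianization (GL (Fin 3) ℤ)) :
    x = 1 ∨ x = Abelianization.of s3 := by
  obtain ⟨g, rfl⟩ := of_surj x
  have hmem : Abelianization.of g ∈
      Subgroup.map (Abelianization.of (G := GL (Fin 3) ℤ)) H3 :=
    Subgroup.mem_map_of_mem _ (gen3 g)
  rw [MonoidHom.map_closure] at hmem
  have hle : Subgroup.closure ((Abelianization.of (G := GL (Fin 3) ℤ)) ''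
      {s3, e01 1, e10 1, e12 1, e21 1, e02 1}) ≤
      Subgroup.closure {Abelianization.of s3, (1 : Abelianization (GL (Fin 3) ℤ))} := by
    rw [Subgroup.closure_le]
    rintro y ⟨z, hz, rfl⟩
    rcases hz with rfl | rfl | rfl | rfl | rfl | rfl
    · exact Subgroup.subset_closure (by simp)
    · rw [of_e01]; exact one_mem _
    · rw [of_e10]; exact one_mem _
    · rw [of_e12]; exact one_mem _
    · rw [of_e21]; exact one_mem _
    · rw [of_e02]; exact one_mem _
  have hs : Abelianization.of s3 * Abelianization.of s3 = 1 := by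
    rw [← _root_.map_mul, show s3 * s3 = 1 from Units.ext (by decide), _root_.map_one]
  have h4 := four_cases hs (one_mul 1) _ (hle hmem)
  rcases h4 with h | h | h | h
  · exact Or.inl h
  · exact Or.inr h
  · exact Or.inl h
  · rw [mul_one] at h; exact Or.inr h

-- ## GL3 abelianization facts
def det3 : GL (Fin 3) ℤ →* ℤˣ := Units.map Matrix.detMonoidHom

def psi3 : Abelianization (GL (Fin 3) ℤ) →* ℤˣ := Abelianization.lift det3

lemma psi3_s3 : psi3 (Abelianization.of s3) = -1 := by
  rw [psi3, Abelianization.lift_apply_of]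
  exact Units.ext (by decide)

lemma of_s3_sq : Abelianization.of s3 * Abelianization.of s3 = 1 := by
  rw [← _root_.map_mul, show s3 * s3 = 1 from Units.ext (by decide), _root_.map_one]

lemma psi3_bij : Function.Bijective psi3 := by
  constructor
  · rw [injective_iff_map_eq_one]
    intro x hx
    rcases ab3_cases x with rfl | rfl
    · rfl
    · rw [psi3_s3] at hx; exact absurd hx (by decide)
  · intro u
    rcases Int.units_eq_one_or u with rfl | rfl
    · exact ⟨1, map_one _⟩
    · exact ⟨Abelianization.of s3, psi3_s3⟩

lemma card_ab3 : Nat.card (Abelianization (GL (Fin 3) ℤ)) = 2 := by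
  rw [Nat.card_eq_of_bijective psi3 psi3_bij]
  simp [Nat.card_eq_fintype_card]

lemma of_s3_ne_one : Abelianization.of s3 ≠ 1 := by
  intro h
  have := psi3_s3
  rw [h, _root_.map_one] at this
  exact absurd this.symm (by decide)

lemma sq_ab3 (x : Abelianization (GL (Fin 3) ℤ)) : x * x = 1 := by
  rcases ab3_cases x with rfl | rfl
  · simp
  · exact of_s3_sq

-- ## GL1
lemma gl1_cases (M : GL (Fin 1) ℤ) : M = 1 ∨ M = s1 := by
  have h : M.val 0 0 * M.inv 0 0 = 1 := by
    have h2 := congrFun (congrFun M.val_inv 0) 0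
    simpa [Matrix.mul_apply, Matrix.one_apply] using h2
  rcases Int.isUnit_iff.mp (IsUnit.of_mul_eq_one _ h) with ha | ha
  · left
    apply Units.ext
    ext i j
    fin_cases i; fin_cases j
    simpa [Matrix.one_apply] using ha
  · right
    apply Units.ext
    ext i j
    fin_cases i; fin_cases j
    simpa [s1, glOfInvol] using ha

def det1 : GL (Fin 1) ℤ →* ℤˣ := Units.map Matrix.detMonoidHom
def psi1 : Abelianization (GL (Fin 1) ℤ) →* ℤˣ := Abelianization.lift det1

lemma psi1_s1 : psi1 (Abelianization.of s1) = -1 := by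
  rw [psi1, Abelianization.lift_apply_of]
  exact Units.ext (by decide)

lemma ab1_cases (x : Abelianization (GL (Fin 1) ℤ)) : x = 1 ∨ x = Abelianization.of s1 := by
  obtain ⟨g, rfl⟩ := of_surj x
  rcases gl1_cases g with rfl | rfl
  · left; exact _root_.map_one _
  · right; rfl

lemma psi1_bij : Function.Bijective psi1 := by
  constructor
  · rw [injective_iff_map_eq_one]
    intro x hx
    rcases ab1_cases x with rfl | rfl
    · rfl
    · rw [psi1_s1] at hx; exact absurd hx (by decide)
  · intro u
    rcases Int.units_eq_one_or u with rfl | rfl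
    · exact ⟨1, map_one _⟩
    · exact ⟨Abelianization.of s1, psi1_s1⟩

lemma card_ab1 : Nat.card (Abelianization (GL (Fin 1) ℤ)) = 2 := by
  rw [Nat.card_eq_of_bijective psi1 psi1_bij]
  simp [Nat.card_eq_fintype_card]

lemma of_s1_ne_one : Abelianization.of s1 ≠ 1 := by
  intro h
  have := psi1_s1
  rw [h, _root_.map_one] at this
  exact absurd this.symm (by decide)

lemma sq_ab1 (x : Abelianization (GL (Fin 1) ℤ)) : x * x = 1 := by
  rcases ab1_cases x with rfl | rfl
  · simp
  · rw [← _root_.map_mul, show s1 * s1 = 1 from Units.ext (by decide), _root_.map_one]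

-- ## GL2 abelianization
def permOfGL : GL (Fin 2) (ZMod 2) →* Equiv.Perm (Fin 2 → ZMod 2) where
  toFun M :=
    { toFun := fun v => M.val.mulVec v
      invFun := fun v => M.inv.mulVec v
      left_inv := fun v => by
        simp only []; rw [Matrix.mulVec_mulVec, M.inv_val, Matrix.one_mulVec]
      right_inv := fun v => by
        simp only []; rw [Matrix.mulVec_mulVec, M.val_inv, Matrix.one_mulVec] }
  map_one' := by ext v i; simp [Matrix.one_mulVec]
  map_mul' A B := by ext v i; exact congrFun (Matrix.mulVec_mulVec v A.val B.val).symm i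

def red2 : GL (Fin 2) ℤ →* GL (Fin 2) (ZMod 2) :=
  Units.map ((Int.castRingHom (ZMod 2)).mapMatrix.toMonoidHom)

def eps2 : GL (Fin 2) ℤ →* ℤˣ := Equiv.Perm.sign.comp (permOfGL.comp red2)

def det2 : GL (Fin 2) ℤ →* ℤˣ := Units.map Matrix.detMonoidHom
def phi2 : GL (Fin 2) ℤ →* ℤˣ × ℤˣ := det2.prod eps2
def psi2 : Abelianization (GL (Fin 2) ℤ) →* ℤˣ × ℤˣ := Abelianization.lift phi2

lemma psi2_s2 : psi2 (Abelianization.of s2) = (-1, 1) := by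
  rw [psi2, Abelianization.lift_apply_of]; decide
lemma psi2_t2 : psi2 (Abelianization.of t2) = (1, -1) := by
  rw [psi2, Abelianization.lift_apply_of]; decide

lemma of_s2_sq : Abelianization.of s2 * Abelianization.of s2 = 1 := by
  rw [← _root_.map_mul, show s2 * s2 = 1 from Units.ext (by decide), _root_.map_one]

lemma of_t2_sq : Abelianization.of t2 * Abelianization.of t2 = 1 := by
  have h : s2 * t2 * s2⁻¹ = t2⁻¹ := Units.ext (by decide)
  have h2 := of_conj s2 t2
  rw [h] at h2
  rw [_root_.map_inv] at h2
  exact mul_eq_one_iff_eq_inv.mpr h2.symm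

lemma ab2_top : Subgroup.closure {Abelianization.of s2, Abelianization.of t2}
    = (⊤ : Subgroup (Abelianization (GL (Fin 2) ℤ))) := by
  rw [eq_top_iff]
  intro x _
  obtain ⟨g, rfl⟩ := of_surj x
  have hmem : Abelianization.of g ∈
      Subgroup.map (Abelianization.of (G := GL (Fin 2) ℤ)) H2 :=
    Subgroup.mem_map_of_mem _ (gen2 g)
  rw [MonoidHom.map_closure] at hmem
  refine Subgroup.closure_le _ |>.mpr ?_ hmem
  rintro y ⟨z, hz, rfl⟩
  rcases hz with rfl | rfl | rfl
  · exact Subgroup.subset_closure (by simp)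
  · exact Subgroup.subset_closure (by simp)
  · -- uE 1
    have h1 : rot2 * t2 * rot2⁻¹ = uE (-1) := Units.ext (by decide)
    have h2 : uE 1 = (uE (-1))⁻¹ := Units.ext (by decide)
    have h3 : Abelianization.of (uE (-1)) = Abelianization.of t2 := by
      rw [← h1]; exact of_conj rot2 t2
    rw [h2, _root_.map_inv, h3]
    exact inv_mem (Subgroup.subset_closure (by simp))

lemma ab2_cases (x : Abelianization (GL (Fin 2) ℤ)) :
    x = 1 ∨ x = Abelianization.of s2 ∨ x = Abelianization.of t2 ∨
      x = Abelianization.of s2 * Abelianization.of t2 :=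
  four_cases of_s2_sq of_t2_sq x (by rw [ab2_top]; trivial)

lemma psi2_bij : Function.Bijective psi2 := by
  constructor
  · rw [injective_iff_map_eq_one]
    intro x hx
    rcases ab2_cases x with rfl | rfl | rfl | rfl
    · rfl
    · rw [psi2_s2] at hx; exact absurd hx (by decide)
    · rw [psi2_t2] at hx; exact absurd hx (by decide)
    · rw [_root_.map_mul, psi2_s2, psi2_t2] at hx; exact absurd hx (by decide)
  · rintro ⟨u, v⟩
    rcases Int.units_eq_one_or u with rfl | rfl <;> rcases Int.units_eq_one_or v with rfl | rfl
    · exact ⟨1, by rw [_root_.map_one]; decide⟩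
    · exact ⟨Abelianization.of t2, psi2_t2⟩
    · exact ⟨Abelianization.of s2, psi2_s2⟩
    · exact ⟨Abelianization.of s2 * Abelianization.of t2,
        by rw [_root_.map_mul, psi2_s2, psi2_t2]; decide⟩

lemma card_ab2 : Nat.card (Abelianization (GL (Fin 2) ℤ)) = 4 := by
  rw [Nat.card_eq_of_bijective psi2 psi2_bij, Nat.card_prod]
  simp [Nat.card_eq_fintype_card]

lemma sq_ab2 (x : Abelianization (GL (Fin 2) ℤ)) : x * x = 1 := by
  rcases ab2_cases x with rfl | rfl | rfl | rfl
  · simp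
  · exact of_s2_sq
  · exact of_t2_sq
  · rw [mul_mul_mul_comm, of_s2_sq, of_t2_sq, one_mul]

lemma of_s2_ne_of_t2 : Abelianization.of s2 ≠ Abelianization.of t2 := by
  intro h
  have := psi2_s2
  rw [h, psi2_t2] at this
  exact absurd this (by decide)

lemma of_s2_ne_one : Abelianization.of s2 ≠ 1 := by
  intro h
  have := psi2_s2
  rw [h, _root_.map_one] at this
  exact absurd this.symm (by decide)

lemma of_t2_ne_one : Abelianization.of t2 ≠ 1 := by
  intro h
  have := psi2_t2
  rw [h, _root_.map_one] at this
  exact absurd this.symm (by decide)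

-- ## Part 4
lemma map_stab_s2 :
    Abelianization.map (stabGL 2) (Abelianization.of s2) = Abelianization.of s3 := by
  rw [Abelianization.map_of, stab_s2, _root_.map_mul, _root_.map_mul]
  have hrot : Abelianization.of rot01 = 1 := by
    have h10 : Abelianization.of (e10 (-1)) = 1 := by
      have h : e10 (-1) = (e10 1)⁻¹ := Units.ext (by decide)
      rw [h, _root_.map_inv, of_e10, inv_one]
    rw [rot01, _root_.map_mul, _root_.map_mul, of_e01, h10]
    simp
  rw [hrot]
  simp

lemma map_stab_t2 :
    Abelianization.map (stabGL 2) (Abelianization.of t2) = 1 := by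
  rw [Abelianization.map_of, stab_t2, of_e12]

/-- `GL_1(ℤ)_ab ≅ ℤ/2` generated by `(-1)`; `GL_2(ℤ)_ab ≅ (ℤ/2)²` generated by
`diag(-1,1)` and `[[1,1],[0,1]]`; `GL_3(ℤ)_ab ≅ ℤ/2` generated by `diag(-1,1,1)`; and under
the stabilisation map (block sum with a `1×1` identity) `diag(-1,1) ↦ diag(-1,1,1)` and
`[[1,1],[0,1]] ↦ 0` in `GL_3(ℤ)_ab`. -/
theorem stmt_6 :
    (Nat.card (Abelianization (GL (Fin 1) ℤ)) = 2 ∧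
      Abelianization.of s1 ≠ 1 ∧ ∀ x : Abelianization (GL (Fin 1) ℤ), x * x = 1) ∧
    (Nat.card (Abelianization (GL (Fin 2) ℤ)) = 4 ∧
      (∀ x : Abelianization (GL (Fin 2) ℤ), x * x = 1) ∧
      Subgroup.closure {Abelianization.of s2, Abelianization.of t2} = ⊤ ∧
      Abelianization.of s2 ≠ Abelianization.of t2 ∧
      Abelianization.of s2 ≠ 1 ∧ Abelianization.of t2 ≠ 1) ∧
    (Nat.card (Abelianization (GL (Fin 3) ℤ)) = 2 ∧
      Abelianization.of s3 ≠ 1 ∧ ∀ x : Abelianization (GL (Fin 3) ℤ), x * x = 1) ∧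
    (Abelianization.map (stabGL 2) (Abelianization.of s2) = Abelianization.of s3 ∧
      Abelianization.map (stabGL 2) (Abelianization.of t2) = 1) := by
  exact ⟨⟨card_ab1, of_s1_ne_one, sq_ab1⟩,
   ⟨card_ab2, sq_ab2, ab2_top, of_s2_ne_of_t2, of_s2_ne_one, of_t2_ne_one⟩,
   ⟨card_ab3, of_s3_ne_one, sq_ab3⟩,
   map_stab_s2, map_stab_t2⟩
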